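/- Let A be a (randomized) graph algorithm whose 1-average sensitivity on any graph with n vertices and m' edges is at most f(n, m'), where average sensitivity of A on a graph H = (V, E') is the expectation over a uniformly random edge e ∈ E' of the earth mover's distance (with Hamming ground metric) between the output distributions A(H) and A(H − e). Then for any integer k ≥ 1 and any graph G with n vertices and m ≥ k edges, the expectation over k independently uniformly chosen edges e₁,…,e_k of the earth mover's distance between A(G) and A(G − {e₁,…,e_k}) is at most Σ_{i=1}^{k} f(n, m − i + 1). -/

import Mathlib

private lemma sum_piFinset_cons {α : Type*} [DecidableEq α] {β : Type*} [AddCommMonoid β]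
    (E : Finset α) (j : ℕ) (F : (Fin (j+1) → α) → β) :
    ∑ t ∈ Fintype.piFinset (fun _ : Fin (j+1) => E), F t
      = ∑ e ∈ E, ∑ r ∈ Fintype.piFinset (fun _ : Fin j => E), F (Fin.cons e r) := by
  have h : Fintype.piFinset (fun _ : Fin (j+1) => E)
      = (E ×ˢ Fintype.piFinset (fun _ : Fin j => E)).map
          (Fin.consEquiv (fun _ : Fin (j+1) => α)).toEmbedding := by
    ext t
    simp [Finset.mem_map_equiv, Fin.consEquiv, Fintype.mem_piFinset, Fin.forall_fin_succ,
      Fin.tail]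
  rw [h, Finset.sum_map, Finset.sum_product]
  rfl

private lemma image_cons_univ {α : Type*} [DecidableEq α] (j : ℕ) (e : α) (r : Fin j → α) :
    Finset.image (Fin.cons e r : Fin (j+1) → α) Finset.univ
      = insert e (Finset.image r Finset.univ) := by
  ext x
  simp [Fin.exists_fin_succ, eq_comm]

private lemma sum_shift (f : ℕ → ℝ) (c j : ℕ) :
    ∑ i ∈ Finset.range (j+1), f (c - i) = f c + ∑ i ∈ Finset.range j, f (c - 1 - i) := by
  rw [Finset.sum_range_succ']
  simp only [Nat.sub_zero]
  rw [add_comm]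
  congr 1
  apply Finset.sum_congr rfl
  intro i _
  congr 1
  omega

/-- `k`-average sensitivity from average sensitivity: if a graph algorithm `A`
(from edge sets to outputs in a space with a distance `d` satisfying the triangle
inequality, e.g. earth mover's distance between output distributions with Hamming
ground metric) has average sensitivity at most `f m'` on every graph with `m'` edges,
then its `k`-average sensitivity on a graph with `m ≥ k` edges is at most
`∑_{i=1}^{k} f (m - i + 1)`. -/
theorem stmt2 {α : Type*} [DecidableEq α] {D : Type*}
    (A : Finset α → D) (d : D → D → ℝ) (f : ℕ → ℝ)
    (hd_nonneg : ∀ x y, 0 ≤ d x y)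
    (hd_tri : ∀ x y z, d x z ≤ d x y + d y z)
    (hsens : ∀ S : Finset α, 1 ≤ S.card →
      (∑ e ∈ S, d (A S) (A (S.erase e))) / (S.card : ℝ) ≤ f S.card)
    (E : Finset α) (k : ℕ) (hk : 1 ≤ k) (hm : k ≤ E.card) :
    (∑ t ∈ Fintype.piFinset (fun _ : Fin k => E),
        d (A E) (A (E \ Finset.image t Finset.univ))) / ((E.card : ℝ) ^ k)
      ≤ ∑ i ∈ Finset.range k, f (E.card - i) := by
  classical
  set m : ℕ := E.card with hmdef
  have hm0 : 0 < m := lt_of_lt_of_le hk hm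
  have hmR : (0:ℝ) < (m:ℝ) := by exact_mod_cast hm0
  -- f is nonnegative on relevant cards
  have hf0 : ∀ c : ℕ, 1 ≤ c → c ≤ m → 0 ≤ f c := by
    intro c hc1 hcm
    obtain ⟨S, hSE, hSc⟩ := Finset.exists_subset_card_eq hcm
    have h1 : (0:ℝ) ≤ (∑ e ∈ S, d (A S) (A (S.erase e))) / (S.card : ℝ) := by
      apply div_nonneg
      · exact Finset.sum_nonneg fun e _ => hd_nonneg _ _
      · positivity
    have h2 := hsens S (by omega)
    rw [hSc] at h1 h2
    linarith
  -- the modified distance with ρ X X = 0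
  set ρ : Finset α → Finset α → ℝ :=
    fun X Y => if X = Y then 0 else d (A X) (A Y) with hρdef
  have hρ_nonneg : ∀ X Y, 0 ≤ ρ X Y := by
    intro X Y; simp only [hρdef]; split <;> [rfl; exact hd_nonneg _ _]
  have hρ_tri : ∀ X Y Z, ρ X Z ≤ ρ X Y + ρ Y Z := by
    intro X Y Z
    simp only [hρdef]
    rcases eq_or_ne X Z with h | h
    · rw [if_pos h]
      have h1 := hρ_nonneg X Y; have h2 := hρ_nonneg Y Z
      simp only [hρdef] at h1 h2
      linarith
    · rw [if_neg h]
      rcases eq_or_ne X Y with h1 | h1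
      · subst h1; rw [if_pos rfl, if_neg h]; simp
      · rcases eq_or_ne Y Z with h2 | h2
        · subst h2; rw [if_pos rfl, if_neg h1]; simp
        · rw [if_neg h1, if_neg h2]; exact hd_tri _ _ _
  have hρle : ∀ X Y, ρ X Y ≤ d (A X) (A Y) := by
    intro X Y; simp only [hρdef]; split
    · next h => subst h; exact hd_nonneg _ _
    · exact le_refl _
  -- key induction
  have key : ∀ j : ℕ, ∀ S : Finset α, S ⊆ E → j ≤ S.card →
      ∑ t ∈ Fintype.piFinset (fun _ : Fin j => E),
          ρ S (S \ Finset.image t Finset.univ)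
        ≤ (m : ℝ) ^ j * ∑ i ∈ Finset.range j, f (S.card - i) := by
    intro j
    induction j with
    | zero =>
      intro S hSE hjS
      simp [hρdef]
    | succ j ih =>
      intro S hSE hjS
      have hScard_le : S.card ≤ m := Finset.card_le_card hSE
      rw [sum_piFinset_cons]
      -- bound each inner sum according to whether e ∈ S
      have hinner : ∀ e ∈ E,
          (∑ r ∈ Fintype.piFinset (fun _ : Fin j => E),
            ρ S (S \ Finset.image (Fin.cons e r) Finset.univ))
          ≤ if e ∈ S then
              (m:ℝ)^j * ρ S (S.erase e)
                + (m:ℝ)^j * ∑ i ∈ Finset.range j, f (S.card - 1 - i)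
            else (m:ℝ)^j * ∑ i ∈ Finset.range j, f (S.card - i) := by
        intro e _
        have hsd : ∀ r : Fin j → α,
            S \ Finset.image (Fin.cons e r) Finset.univ
              = (S.erase e) \ Finset.image r Finset.univ := by
          intro r
          rw [image_cons_univ, Finset.sdiff_insert]
          ext x
          simp only [Finset.mem_erase, Finset.mem_sdiff]
          tauto
        simp only [hsd]
        by_cases he : e ∈ S
        · rw [if_pos he]
          calc ∑ r ∈ Fintype.piFinset (fun _ : Fin j => E),
                ρ S ((S.erase e) \ Finset.image r Finset.univ)
              ≤ ∑ r ∈ Fintype.piFinset (fun _ : Fin j => E),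
                (ρ S (S.erase e)
                  + ρ (S.erase e) ((S.erase e) \ Finset.image r Finset.univ)) :=
                Finset.sum_le_sum fun r _ => hρ_tri _ _ _
            _ = (Fintype.piFinset (fun _ : Fin j => E)).card • ρ S (S.erase e)
                  + ∑ r ∈ Fintype.piFinset (fun _ : Fin j => E),
                      ρ (S.erase e) ((S.erase e) \ Finset.image r Finset.univ) := by
                rw [Finset.sum_add_distrib, Finset.sum_const]
            _ ≤ (m:ℝ)^j * ρ S (S.erase e)
                  + (m:ℝ)^j * ∑ i ∈ Finset.range j, f (S.card - 1 - i) := by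
                have hcard : (Fintype.piFinset (fun _ : Fin j => E)).card = m ^ j := by
                  simp [Fintype.card_piFinset, hmdef]
                have h1 : (S.erase e).card = S.card - 1 := Finset.card_erase_of_mem he
                have h2 := ih (S.erase e) (Finset.Subset.trans (Finset.erase_subset _ _) hSE)
                  (by rw [h1]; omega)
                rw [h1] at h2
                rw [hcard, nsmul_eq_mul]
                push_cast
                linarith
        · rw [if_neg he]
          have : S.erase e = S := Finset.erase_eq_of_notMem he
          rw [this]
          exact ih S hSE (by omega)
      -- sum the bounds
      have hsum : (∑ e ∈ E, ∑ r ∈ Fintype.piFinset (fun _ : Fin j => E),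
            ρ S (S \ Finset.image (Fin.cons e r) Finset.univ))
          ≤ ∑ e ∈ E, (if e ∈ S then
              (m:ℝ)^j * ρ S (S.erase e)
                + (m:ℝ)^j * ∑ i ∈ Finset.range j, f (S.card - 1 - i)
            else (m:ℝ)^j * ∑ i ∈ Finset.range j, f (S.card - i)) :=
        Finset.sum_le_sum hinner
      refine le_trans hsum ?_
      rw [← Finset.sum_sdiff hSE]
      have hA : (∑ e ∈ E \ S, (if e ∈ S then
              (m:ℝ)^j * ρ S (S.erase e)
                + (m:ℝ)^j * ∑ i ∈ Finset.range j, f (S.card - 1 - i)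
            else (m:ℝ)^j * ∑ i ∈ Finset.range j, f (S.card - i)))
          = ((E \ S).card : ℝ) * ((m:ℝ)^j * ∑ i ∈ Finset.range j, f (S.card - i)) := by
        rw [Finset.sum_congr rfl (fun e he => if_neg (Finset.mem_sdiff.mp he).2),
          Finset.sum_const, nsmul_eq_mul]
      have hBsum : (∑ e ∈ S, (if e ∈ S then
              (m:ℝ)^j * ρ S (S.erase e)
                + (m:ℝ)^j * ∑ i ∈ Finset.range j, f (S.card - 1 - i)
            else (m:ℝ)^j * ∑ i ∈ Finset.range j, f (S.card - i)))
          = (m:ℝ)^j * (∑ e ∈ S, ρ S (S.erase e))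
            + (S.card : ℝ) * ((m:ℝ)^j * ∑ i ∈ Finset.range j, f (S.card - 1 - i)) := by
        rw [Finset.sum_congr rfl (fun e he => if_pos he), Finset.sum_add_distrib,
          Finset.sum_const, nsmul_eq_mul, ← Finset.mul_sum]
      rw [hA, hBsum]
      -- notation
      have hrange : ∑ i ∈ Finset.range (j+1), f (S.card - i)
          = f S.card + ∑ i ∈ Finset.range j, f (S.card - 1 - i) := sum_shift f S.card j
      have hCaB : ∑ i ∈ Finset.range j, f (S.card - i)
          ≤ f S.card + ∑ i ∈ Finset.range j, f (S.card - 1 - i) := by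
        rcases Nat.eq_zero_or_pos j with hj0 | hj0
        · subst hj0
          simpa using hf0 S.card (by omega) hScard_le
        · obtain ⟨j', rfl⟩ : ∃ j', j = j' + 1 := ⟨j - 1, by omega⟩
          rw [sum_shift f S.card j']
          have h1 : ∑ i ∈ Finset.range j', f (S.card - 1 - i)
              ≤ ∑ i ∈ Finset.range (j'+1), f (S.card - 1 - i) := by
            rw [Finset.sum_range_succ]
            have : 0 ≤ f (S.card - 1 - j') := by apply hf0 <;> omega
            linarith
          linarith
      have hρsum : ∑ e ∈ S, ρ S (S.erase e) ≤ (S.card : ℝ) * f S.card := by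
        have h1 : ∑ e ∈ S, ρ S (S.erase e) ≤ ∑ e ∈ S, d (A S) (A (S.erase e)) :=
          Finset.sum_le_sum fun e _ => hρle _ _
        have hs1 : 1 ≤ S.card := by omega
        have h2 := hsens S hs1
        have hspos : (0:ℝ) < (S.card : ℝ) := by exact_mod_cast hs1
        rw [div_le_iff₀ hspos] at h2
        linarith
      rw [hrange]
      have hpow : (0:ℝ) ≤ (m:ℝ)^j := by positivity
      have hmsle : ((E \ S).card : ℝ) = (m:ℝ) - (S.card : ℝ) := by
        rw [Finset.card_sdiff_of_subset hSE]
        have : S.card ≤ m := hScard_le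
        push_cast [← hmdef, this]
        ring
      have hsle : (S.card : ℝ) ≤ (m:ℝ) := by exact_mod_cast hScard_le
      have hsnn : (0:ℝ) ≤ (S.card : ℝ) := by positivity
      set a : ℝ := f S.card
      set B : ℝ := ∑ i ∈ Finset.range j, f (S.card - 1 - i)
      set C : ℝ := ∑ i ∈ Finset.range j, f (S.card - i)
      rw [hmsle]
      have h2 : ((m:ℝ) - (S.card:ℝ)) * ((m:ℝ)^j * C)
          ≤ ((m:ℝ) - (S.card:ℝ)) * ((m:ℝ)^j * (a + B)) := by
        apply mul_le_mul_of_nonneg_left _ (by linarith)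
        exact mul_le_mul_of_nonneg_left hCaB hpow
      have h3 : (m:ℝ)^j * (∑ e ∈ S, ρ S (S.erase e)) ≤ (m:ℝ)^j * ((S.card:ℝ) * a) :=
        mul_le_mul_of_nonneg_left hρsum hpow
      have hfin : ((m:ℝ) - (S.card:ℝ)) * ((m:ℝ)^j * (a + B))
            + ((m:ℝ)^j * ((S.card:ℝ) * a) + (S.card:ℝ) * ((m:ℝ)^j * B))
          = (m:ℝ)^(j+1) * (a + B) := by ring
      linarith
  -- conclude
  have heq : ∑ t ∈ Fintype.piFinset (fun _ : Fin k => E),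
      d (A E) (A (E \ Finset.image t Finset.univ))
      = ∑ t ∈ Fintype.piFinset (fun _ : Fin k => E),
          ρ E (E \ Finset.image t Finset.univ) := by
    apply Finset.sum_congr rfl
    intro t ht
    have htmem : t ⟨0, hk⟩ ∈ E := by
      rw [Fintype.mem_piFinset] at ht
      exact ht _
    have hne : E ≠ E \ Finset.image t Finset.univ := by
      intro h
      have : t ⟨0, hk⟩ ∈ E \ Finset.image t Finset.univ := h ▸ htmem
      rw [Finset.mem_sdiff] at this
      exact this.2 (Finset.mem_image_of_mem t (Finset.mem_univ _))
    simp only [hρdef, if_neg hne]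
  rw [heq, div_le_iff₀ (by positivity)]
  calc ∑ t ∈ Fintype.piFinset (fun _ : Fin k => E), ρ E (E \ Finset.image t Finset.univ)
      ≤ (m:ℝ)^k * ∑ i ∈ Finset.range k, f (E.card - i) := key k E (Finset.Subset.refl E) hm
    _ = (∑ i ∈ Finset.range k, f (E.card - i)) * (E.card:ℝ)^k := by rw [hmdef]; ring
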